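/- The reduced dual objective f : ℝ^{n+m−1} → ℝ, f(x) = η Σ_{i=1}^n Σ_{j=1}^m exp((α_i + β_j − M_{ij})/η) − α^T a − (β_{−m})^T b_{−m} for x = (α, β_{−m}) with β_m = 0, is twice differentiable, and its Hessian at x equals the block matrix ∇²f(x) = η⁻¹ [diag(T 1_m), T_{−m}; (T_{−m})^T, diag((T_{−m})^T 1_n)], where T has entries T_{ij} = exp((α_i + β_j − M_{ij})/η), T_{−m} denotes T with its m-th column removed, and 1_k is the all-ones vector in ℝ^k. -/

import Mathlib

open Matrix

namespace Stmt11
variable (n m : ℕ)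

noncomputable def sig (j : Fin (m+1)) : EuclideanSpace ℝ (Fin n ⊕ Fin m) →L[ℝ] ℝ :=
  Fin.lastCases 0 (fun j' => EuclideanSpace.proj (Sum.inr j')) j

lemma sig_apply (j : Fin (m+1)) (z : EuclideanSpace ℝ (Fin n ⊕ Fin m)) :
    sig n m j z = Fin.snoc (α := fun _ => ℝ) (fun j' : Fin m => z (Sum.inr j')) 0 j := by
  induction j using Fin.lastCases with
  | last => simp [sig]
  | cast j' => simp [sig]

variable (M : Matrix (Fin n) (Fin (m + 1)) ℝ) (η : ℝ)

noncomputable def Tf (x : EuclideanSpace ℝ (Fin n ⊕ Fin m)) (i : Fin n) (j : Fin (m+1)) : ℝ :=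
  Real.exp ((x (Sum.inl i) + sig n m j x - M i j) / η)

noncomputable def L (i : Fin n) (j : Fin (m+1)) : EuclideanSpace ℝ (Fin n ⊕ Fin m) →L[ℝ] ℝ :=
  η⁻¹ • (EuclideanSpace.proj (Sum.inl i) + sig n m j)

lemma hasFDerivAt_T (i : Fin n) (j : Fin (m+1)) (x : EuclideanSpace ℝ (Fin n ⊕ Fin m)) :
    HasFDerivAt (fun z => Tf n m M η z i j) (Tf n m M η x i j • L n m η i j) x := by
  have h1 : HasFDerivAt (fun z : EuclideanSpace ℝ (Fin n ⊕ Fin m) =>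
      (z (Sum.inl i) + sig n m j z - M i j) / η) (L n m η i j) x := by
    have := (((EuclideanSpace.proj (Sum.inl i) + sig n m j).hasFDerivAt (x := x)).sub_const
      (M i j)).const_smul (η⁻¹)
    exact this.congr_of_eventuallyEq (Filter.Eventually.of_forall fun z => by
      simp [div_eq_inv_mul, smul_eq_mul])
  exact h1.exp
end Stmt11

namespace Stmt11
variable (n m : ℕ) (M : Matrix (Fin n) (Fin (m + 1)) ℝ) (η : ℝ)

lemma sig_castSucc (j' : Fin m) (v : EuclideanSpace ℝ (Fin n ⊕ Fin m)) :
    sig n m (Fin.castSucc j') v = v (Sum.inr j') := by simp [sig]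

lemma sig_last (v : EuclideanSpace ℝ (Fin n ⊕ Fin m)) : sig n m (Fin.last m) v = 0 := by
  simp [sig]

lemma key_sum (hη : η ≠ 0) (T : Fin n → Fin (m+1) → ℝ) (v : EuclideanSpace ℝ (Fin n ⊕ Fin m)) :
    ∑ i, ∑ j, T i j * (v (Sum.inl i) + sig n m j v)
      = ∑ i, (∑ j, T i j) * v (Sum.inl i)
        + ∑ j' : Fin m, (∑ i, T i (Fin.castSucc j')) * v (Sum.inr j') := by
  have inner : ∀ i, ∑ j, T i j * sig n m j v
      = ∑ j' : Fin m, T i (Fin.castSucc j') * v (Sum.inr j') := fun i => by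
    rw [Fin.sum_univ_castSucc]
    simp [sig_castSucc, sig_last]
  simp only [mul_add, Finset.sum_add_distrib]
  congr 1
  · exact Finset.sum_congr rfl fun i _ => by rw [← Finset.sum_mul]
  · rw [Finset.sum_congr rfl fun i _ => inner i, Finset.sum_comm]
    exact Finset.sum_congr rfl fun j' _ => by rw [← Finset.sum_mul]
end Stmt11

namespace Stmt11
variable (n m : ℕ) (M : Matrix (Fin n) (Fin (m + 1)) ℝ) (η : ℝ)
variable (a : Fin n → ℝ) (b : Fin (m + 1) → ℝ)

noncomputable def Gf (x : EuclideanSpace ℝ (Fin n ⊕ Fin m)) : EuclideanSpace ℝ (Fin n ⊕ Fin m) :=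
  (WithLp.equiv 2 _).symm (Sum.elim (fun i => ∑ j, Tf n m M η x i j - a i)
    (fun j => ∑ i, Tf n m M η x i (Fin.castSucc j) - b (Fin.castSucc j)))

lemma Gf_inl (x : EuclideanSpace ℝ (Fin n ⊕ Fin m)) (i : Fin n) :
    Gf n m M η a b x (Sum.inl i) = ∑ j, Tf n m M η x i j - a i := rfl

lemma Gf_inr (x : EuclideanSpace ℝ (Fin n ⊕ Fin m)) (j : Fin m) :
    Gf n m M η a b x (Sum.inr j)
      = ∑ i, Tf n m M η x i (Fin.castSucc j) - b (Fin.castSucc j) := rfl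

noncomputable def Ff (x : EuclideanSpace ℝ (Fin n ⊕ Fin m)) :
    EuclideanSpace ℝ (Fin n ⊕ Fin m) →L[ℝ] ℝ :=
  η • (∑ i, ∑ j, Tf n m M η x i j • L n m η i j)
    - ((∑ i, a i • (EuclideanSpace.proj (Sum.inl i) : EuclideanSpace ℝ (Fin n ⊕ Fin m) →L[ℝ] ℝ))
      + ∑ j : Fin m, b (Fin.castSucc j) • (EuclideanSpace.proj (Sum.inr j) :
        EuclideanSpace ℝ (Fin n ⊕ Fin m) →L[ℝ] ℝ))

lemma Ff_apply (hη : η ≠ 0) (x v : EuclideanSpace ℝ (Fin n ⊕ Fin m)) :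
    Ff n m M η a b x v
      = ∑ i, (∑ j, Tf n m M η x i j - a i) * v (Sum.inl i)
        + ∑ j' : Fin m, (∑ i, Tf n m M η x i (Fin.castSucc j') - b (Fin.castSucc j'))
            * v (Sum.inr j') := by
  have expand : Ff n m M η a b x v
      = η * ∑ i, ∑ j, Tf n m M η x i j * (η⁻¹ * (v (Sum.inl i) + sig n m j v))
        - (∑ i, a i * v (Sum.inl i) + ∑ j' : Fin m, b (Fin.castSucc j') * v (Sum.inr j')) := by
    simp [Ff, L, ContinuousLinearMap.sum_apply, Finset.mul_sum]
    exact Finset.sum_congr rfl fun i _ => Finset.sum_congr rfl fun j _ => by ring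
  rw [expand]
  have : ∑ i, ∑ j, Tf n m M η x i j * (η⁻¹ * (v (Sum.inl i) + sig n m j v))
      = η⁻¹ * ∑ i, ∑ j, Tf n m M η x i j * (v (Sum.inl i) + sig n m j v) := by
    simp only [Finset.mul_sum]; exact Finset.sum_congr rfl fun i _ =>
      Finset.sum_congr rfl fun j _ => by ring
  rw [this, key_sum n m η hη, ← mul_assoc, mul_inv_cancel₀ hη, one_mul]
  simp only [sub_mul, Finset.sum_sub_distrib]
  ring
end Stmt11

namespace Stmt11
variable (n m : ℕ) (M : Matrix (Fin n) (Fin (m + 1)) ℝ) (η : ℝ)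
variable (a : Fin n → ℝ) (b : Fin (m + 1) → ℝ)

lemma toDual_Gf (hη : η ≠ 0) (x : EuclideanSpace ℝ (Fin n ⊕ Fin m)) :
    (InnerProductSpace.toDual ℝ (EuclideanSpace ℝ (Fin n ⊕ Fin m))) (Gf n m M η a b x)
      = Ff n m M η a b x := by
  ext v
  rw [InnerProductSpace.toDual_apply_apply, Ff_apply n m M η a b hη]
  simp [PiLp.inner_apply, RCLike.inner_apply, Fintype.sum_sum_type, Gf_inl, Gf_inr]
  congr 1 <;> exact Finset.sum_congr rfl fun _ _ => mul_comm _ _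

lemma hasGradientAt_f (hη : η ≠ 0)
    (f : EuclideanSpace ℝ (Fin n ⊕ Fin m) → ℝ)
    (hf : ∀ x : EuclideanSpace ℝ (Fin n ⊕ Fin m),
      f x = η * ∑ i, ∑ j, Real.exp
          ((x (Sum.inl i) + Fin.snoc (α := fun _ => ℝ) (fun j' : Fin m => x (Sum.inr j')) 0 j
            - M i j) / η)
        - ∑ i, x (Sum.inl i) * a i
        - ∑ j : Fin m, x (Sum.inr j) * b (Fin.castSucc j))
    (x : EuclideanSpace ℝ (Fin n ⊕ Fin m)) :
    HasGradientAt f (Gf n m M η a b x) x := by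
  rw [hasGradientAt_iff_hasFDerivAt, toDual_Gf n m M η a b hη]
  have hfe : f = fun z => η * ∑ i, ∑ j, Tf n m M η z i j
      - ∑ i, z (Sum.inl i) * a i - ∑ j : Fin m, z (Sum.inr j) * b (Fin.castSucc j) :=
    funext fun z => by rw [hf z]; simp only [Tf, sig_apply]
  rw [hfe, Ff, sub_add_eq_sub_sub]
  refine HasFDerivAt.sub (HasFDerivAt.sub ?_ ?_) ?_
  · exact (HasFDerivAt.fun_sum fun i _ => HasFDerivAt.fun_sum fun j _ =>
      hasFDerivAt_T n m M η i j x).const_mul η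
  · have hd := ((∑ i, a i • (EuclideanSpace.proj (Sum.inl i) :
        EuclideanSpace ℝ (Fin n ⊕ Fin m) →L[ℝ] ℝ))).hasFDerivAt (x := x)
    have heq : (fun z : EuclideanSpace ℝ (Fin n ⊕ Fin m) => ∑ i, z (Sum.inl i) * a i)
        = ⇑(∑ i, a i • (EuclideanSpace.proj (Sum.inl i) :
          EuclideanSpace ℝ (Fin n ⊕ Fin m) →L[ℝ] ℝ)) := by
      ext z; simp [ContinuousLinearMap.sum_apply, mul_comm]
    rw [heq]; exact hd
  · have hd := ((∑ j : Fin m, b (Fin.castSucc j) • (EuclideanSpace.proj (Sum.inr j) :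
        EuclideanSpace ℝ (Fin n ⊕ Fin m) →L[ℝ] ℝ))).hasFDerivAt (x := x)
    have heq : (fun z : EuclideanSpace ℝ (Fin n ⊕ Fin m) =>
          ∑ j : Fin m, z (Sum.inr j) * b (Fin.castSucc j))
        = ⇑(∑ j : Fin m, b (Fin.castSucc j) • (EuclideanSpace.proj (Sum.inr j) :
          EuclideanSpace ℝ (Fin n ⊕ Fin m) →L[ℝ] ℝ)) := by
      ext z; simp [ContinuousLinearMap.sum_apply, mul_comm]
    rw [heq]; exact hd

lemma hasFDerivAt_Gf_inl (i : Fin n) (x : EuclideanSpace ℝ (Fin n ⊕ Fin m)) :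
    HasFDerivAt (fun z => Gf n m M η a b z (Sum.inl i))
      (∑ j, Tf n m M η x i j • L n m η i j) x := by
  simp only [Gf_inl]
  exact (HasFDerivAt.fun_sum fun j _ => hasFDerivAt_T n m M η i j x).sub_const (a i)

lemma hasFDerivAt_Gf_inr (j : Fin m) (x : EuclideanSpace ℝ (Fin n ⊕ Fin m)) :
    HasFDerivAt (fun z => Gf n m M η a b z (Sum.inr j))
      (∑ i, Tf n m M η x i (Fin.castSucc j) • L n m η i (Fin.castSucc j)) x := by
  simp only [Gf_inr]
  exact (HasFDerivAt.fun_sum fun i _ => hasFDerivAt_T n m M η i (Fin.castSucc j) x).sub_const _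

lemma differentiable_Gf : Differentiable ℝ (Gf n m M η a b) := by
  have h1 : Differentiable ℝ (fun z => (fun p => Gf n m M η a b z p : (Fin n ⊕ Fin m) → ℝ)) := by
    refine differentiable_pi.2 fun p => fun x => ?_
    cases p with
    | inl i => exact (hasFDerivAt_Gf_inl n m M η a b i x).differentiableAt
    | inr j => exact (hasFDerivAt_Gf_inr n m M η a b j x).differentiableAt
  exact ((PiLp.continuousLinearEquiv 2 ℝ (fun _ : Fin n ⊕ Fin m => ℝ)).symm.differentiable).comp h1

lemma fderiv_Gf_coord (x w : EuclideanSpace ℝ (Fin n ⊕ Fin m)) (p : Fin n ⊕ Fin m) :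
    fderiv ℝ (Gf n m M η a b) x w p = fderiv ℝ (fun z => Gf n m M η a b z p) x w := by
  have h := ((EuclideanSpace.proj p).hasFDerivAt
    (x := Gf n m M η a b x)).comp x (differentiable_Gf n m M η a b x).hasFDerivAt
  have h2 : fderiv ℝ (fun z => Gf n m M η a b z p) x
      = (EuclideanSpace.proj p).comp (fderiv ℝ (Gf n m M η a b) x) := h.fderiv
  rw [h2]
  rfl
end Stmt11

namespace Stmt11
variable (n m : ℕ) (M : Matrix (Fin n) (Fin (m + 1)) ℝ) (η : ℝ)

lemma sig_single_inl (j : Fin (m+1)) (i' : Fin n) :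
    sig n m j (EuclideanSpace.single (Sum.inl i') (1:ℝ)) = 0 := by
  induction j using Fin.lastCases with
  | last => simp [sig]
  | cast j' => simp [sig, EuclideanSpace.single_apply]

lemma sig_single_inr (j : Fin (m+1)) (j'' : Fin m) :
    sig n m j (EuclideanSpace.single (Sum.inr j'') (1:ℝ))
      = if j = Fin.castSucc j'' then 1 else 0 := by
  induction j using Fin.lastCases with
  | last =>
    simp [sig, (Fin.castSucc_lt_last j'').ne']
  | cast j' =>
    simp [sig, EuclideanSpace.single_apply, Fin.castSucc_inj, eq_comm]
end Stmt11




open Matrix in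
/-- The reduced dual objective is twice differentiable, and its Hessian
at `x` equals the block matrix
`η⁻¹ [diag(T 1_m), T_{−m}; (T_{−m})^T, diag((T_{−m})^T 1_n)]`
(the paper's `m` equals our `m+1`; the domain `ℝ^{n+m−1}` is
`EuclideanSpace ℝ (Fin n ⊕ Fin m)`, and the Hessian entry at `(p, q)` is the
`p`-coordinate of the derivative of the gradient in the direction of the `q`-th
standard basis vector). -/
theorem stmt11 (n m : ℕ) (hn : 1 ≤ n) (hm : 1 ≤ m)
    (M : Matrix (Fin n) (Fin (m + 1)) ℝ) (η : ℝ) (hη : 0 < η)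
    (a : Fin n → ℝ) (b : Fin (m + 1) → ℝ)
    (ha : ∀ i, 0 < a i) (hb : ∀ j, 0 < b j)
    (hsa : ∑ i, a i = 1) (hsb : ∑ j, b j = 1)
    (f : EuclideanSpace ℝ (Fin n ⊕ Fin m) → ℝ)
    (hf : ∀ x : EuclideanSpace ℝ (Fin n ⊕ Fin m),
      f x = η * ∑ i, ∑ j, Real.exp
          ((x (Sum.inl i) + Fin.snoc (α := fun _ => ℝ) (fun j' : Fin m => x (Sum.inr j')) 0 j
            - M i j) / η)
        - ∑ i, x (Sum.inl i) * a i
        - ∑ j : Fin m, x (Sum.inr j) * b (Fin.castSucc j)) :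
    Differentiable ℝ f ∧
    Differentiable ℝ (fun z => gradient f z) ∧
    ∀ x : EuclideanSpace ℝ (Fin n ⊕ Fin m),
      let T : Matrix (Fin n) (Fin (m + 1)) ℝ := Matrix.of fun i j => Real.exp
        ((x (Sum.inl i) + Fin.snoc (α := fun _ => ℝ) (fun j' : Fin m => x (Sum.inr j')) 0 j
          - M i j) / η)
      let Tm : Matrix (Fin n) (Fin m) ℝ := Matrix.of fun i j => T i (Fin.castSucc j)
      ∀ p q : Fin n ⊕ Fin m,
        fderiv ℝ (fun z => gradient f z) x (EuclideanSpace.single q 1) p =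
          (η⁻¹ • Matrix.fromBlocks
            (Matrix.diagonal fun i => ∑ j, T i j) Tm
            Tmᵀ (Matrix.diagonal fun j => ∑ i, Tm i j)) p q := by
  have hη' : η ≠ 0 := ne_of_gt hη
  have hgrad : ∀ x, HasGradientAt f (Stmt11.Gf n m M η a b x) x :=
    Stmt11.hasGradientAt_f n m M η a b hη' f hf
  have hgradeq : (fun z => gradient f z) = Stmt11.Gf n m M η a b :=
    funext fun z => (hgrad z).gradient
  refine ⟨fun x => (hgrad x).differentiableAt, ?_, ?_⟩
  · rw [hgradeq]; exact Stmt11.differentiable_Gf n m M η a b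
  intro x T Tm p q
  have hT : ∀ i j, T i j = Stmt11.Tf n m M η x i j := fun i j => by
    simp only [T, Matrix.of_apply, Stmt11.Tf, Stmt11.sig_apply]
  rw [hgradeq, Stmt11.fderiv_Gf_coord n m M η a b x _ p]
  cases p with
  | inl i =>
    rw [(Stmt11.hasFDerivAt_Gf_inl n m M η a b i x).fderiv]
    cases q with
    | inl i' =>
      simp only [ContinuousLinearMap.sum_apply, ContinuousLinearMap.smul_apply, Stmt11.L,
        ContinuousLinearMap.add_apply, Stmt11.sig_single_inl, PiLp.proj_apply,
        EuclideanSpace.single_apply, Matrix.smul_apply, Matrix.fromBlocks_apply₁₁,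
        Matrix.diagonal_apply, smul_eq_mul, Sum.inl.injEq, hT]
      rcases eq_or_ne i i' with rfl | h
      · simp [Finset.mul_sum]; exact Finset.sum_congr rfl fun j _ => by ring
      · simp [h, Ne.symm h]
    | inr j'' =>
      simp only [ContinuousLinearMap.sum_apply, ContinuousLinearMap.smul_apply, Stmt11.L,
        ContinuousLinearMap.add_apply, Stmt11.sig_single_inr, PiLp.proj_apply,
        EuclideanSpace.single_apply, Matrix.smul_apply, Matrix.fromBlocks_apply₁₂,
        Matrix.of_apply, smul_eq_mul, hT, Tm]
      simp [mul_ite, Finset.sum_ite_eq', mul_comm]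
  | inr j =>
    rw [(Stmt11.hasFDerivAt_Gf_inr n m M η a b j x).fderiv]
    cases q with
    | inl i' =>
      simp only [ContinuousLinearMap.sum_apply, ContinuousLinearMap.smul_apply, Stmt11.L,
        ContinuousLinearMap.add_apply, Stmt11.sig_single_inl, PiLp.proj_apply,
        EuclideanSpace.single_apply, Matrix.smul_apply, Matrix.fromBlocks_apply₂₁,
        Matrix.transpose_apply, Matrix.of_apply, smul_eq_mul, hT, Tm]
      simp [mul_ite, Finset.sum_ite_eq', mul_comm]
    | inr j' =>
      simp only [ContinuousLinearMap.sum_apply, ContinuousLinearMap.smul_apply, Stmt11.L,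
        ContinuousLinearMap.add_apply, Stmt11.sig_single_inr, PiLp.proj_apply,
        EuclideanSpace.single_apply, Matrix.smul_apply, Matrix.fromBlocks_apply₂₂,
        Matrix.diagonal_apply, Matrix.of_apply, smul_eq_mul, hT, Tm, Fin.castSucc_inj]
      rcases eq_or_ne j j' with rfl | h
      · simp [Finset.mul_sum]; exact Finset.sum_congr rfl fun i _ => by ring
      · simp [h, Ne.symm h]
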